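/- Let X ⊆ A^G be a subshift over a countable group G such that for every x ∈ X and every Følner sequence (F_n) of G, the density of 1's dens(1, F_n, x) converges to a fixed irrational α ∈ [0,1] \ ℚ, where A = {0,1}. Suppose additionally G is amenable and infinite. Then no configuration x ∈ X has finite orbit under the shift action; that is, X is weakly aperiodic. -/

import Mathlib

open Filter

/-- A (right) Følner sequence of nonempty finite subsets of `G`. -/
def IsFolner {G : Type*} [Group G] [DecidableEq G] (F : ℕ → Finset G) : Prop :=
  (∀ n, (F n).Nonempty) ∧
  ∀ g : G, Tendsto
    (fun n => (((symmDiff ((F n).image (· * g)) (F n))).card : ℝ) / ((F n).card : ℝ))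
    atTop (nhds 0)

/-- The shift action of `G` on configurations `G → Bool`. -/
def shift {G : Type*} [Group G] (g : G) (x : G → Bool) : G → Bool :=
  fun h => x (g⁻¹ * h)

/-- Density of `1`'s of the configuration `x` on the finite set `F`. -/
noncomputable def dens {G : Type*} (F : Finset G) (x : G → Bool) : ℝ :=
  ((F.filter (fun g => x g = true)).card : ℝ) / (F.card : ℝ)

lemma shift_shift {G : Type*} [Group G] (g h : G) (x : G → Bool) :
    shift g (shift h x) = shift (g * h) x := by
  funext k; simp [shift, mul_assoc]

lemma shift_one' {G : Type*} [Group G] (x : G → Bool) : shift 1 x = x := by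
  funext k; simp [shift]

lemma shift_eq_iff {G : Type*} [Group G] (u v : G) (x : G → Bool) :
    shift u x = shift v x ↔ shift (v⁻¹ * u) x = x := by
  constructor
  · intro h
    rw [← shift_shift, h, shift_shift, inv_mul_cancel, shift_one']
  · intro h
    have := congrArg (shift v) h
    rw [shift_shift, mul_inv_cancel_left] at this
    exact this

lemma card_filter_le_card_filter_add {β : Type*} [DecidableEq β]
    (P : β → Prop) [DecidablePred P] (s t : Finset β) :
    (s.filter P).card ≤ (t.filter P).card + (symmDiff s t).card := by
  have h : s.filter P ⊆ t.filter P ∪ symmDiff s t := by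
    intro a ha
    simp only [Finset.mem_filter, Finset.mem_union, Finset.mem_symmDiff] at *
    tauto
  exact (Finset.card_le_card h).trans (Finset.card_union_le _ _)

lemma abs_card_filter_sub {β : Type*} [DecidableEq β]
    (P : β → Prop) [DecidablePred P] (s t : Finset β) :
    |((s.filter P).card : ℝ) - ((t.filter P).card : ℝ)| ≤ ((symmDiff s t).card : ℝ) := by
  have h1 : ((s.filter P).card : ℝ) ≤ ((t.filter P).card : ℝ) + ((symmDiff s t).card : ℝ) := by
    exact_mod_cast card_filter_le_card_filter_add P s t
  have h2 : ((t.filter P).card : ℝ) ≤ ((s.filter P).card : ℝ) + ((symmDiff s t).card : ℝ) := by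
    have := card_filter_le_card_filter_add P t s
    rw [symmDiff_comm] at this
    exact_mod_cast this
  rw [abs_sub_le_iff]
  constructor <;> linarith

theorem stmt_16 {G : Type*} [Group G] [Countable G] [Infinite G] [DecidableEq G]
    (hamen : ∃ F : ℕ → Finset G, IsFolner F)
    (α : ℝ) (hα0 : 0 ≤ α) (hα1 : α ≤ 1) (hirr : Irrational α)
    (X : Set (G → Bool))
    (hinv : ∀ x ∈ X, ∀ g : G, shift g x ∈ X)
    (hdens : ∀ x ∈ X, ∀ F : ℕ → Finset G, IsFolner F →
      Tendsto (fun n => dens (F n) x) atTop (nhds α)) :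
    ∀ x ∈ X, Set.Infinite {y : G → Bool | ∃ g : G, y = shift g x} := by
  classical
  intro x hx
  by_contra hinf
  rw [Set.not_infinite] at hinf
  obtain ⟨F, hFne, hFol⟩ := hamen
  set O : Finset (G → Bool) := hinf.toFinset with hOdef
  have hmemO : ∀ g : G, shift g x ∈ O := fun g => hinf.mem_toFinset.mpr ⟨g, rfl⟩
  have hcard : ∀ n, (0:ℝ) < ((F n).card : ℝ) := fun n => by
    exact_mod_cast Finset.card_pos.mpr (hFne n)
  set N : ℕ := O.card with hNdef
  have hN : 0 < N := Finset.card_pos.mpr ⟨x, by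
    have := hmemO 1; rwa [shift_one'] at this⟩
  have hN' : ((N:ℝ)) ≠ 0 := Nat.cast_ne_zero.mpr hN.ne'
  set ρ : (G → Bool) → ℕ → ℝ :=
    fun y n => (((F n).filter (fun g => shift g⁻¹ x = y)).card : ℝ) / ((F n).card : ℝ) with hρ
  -- the fibers partition each F n
  have hsum : ∀ n, ∑ y ∈ O, ρ y n = 1 := by
    intro n
    rw [hρ, ← Finset.sum_div, div_eq_one_iff_eq (ne_of_gt (hcard n))]
    norm_cast
    exact (Finset.card_eq_sum_card_fiberwise (fun g _ => hmemO g⁻¹)).symm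
  -- pairwise differences of fiber densities tend to 0
  have hdiff : ∀ y ∈ O, ∀ y' ∈ O,
      Tendsto (fun n => ρ y' n - ρ y n) atTop (nhds 0) := by
    intro y hy y' hy'
    rw [hOdef, Set.Finite.mem_toFinset] at hy hy'
    obtain ⟨a, rfl⟩ := hy
    obtain ⟨b, rfl⟩ := hy'
    have hfib : ∀ g : G, (shift g⁻¹ x = shift b x) ↔ (shift (g * (a * b⁻¹)⁻¹)⁻¹ x = shift a x) := by
      intro g
      rw [shift_eq_iff, shift_eq_iff]
      have h : b⁻¹ * g⁻¹ = a⁻¹ * (g * (a * b⁻¹)⁻¹)⁻¹ := by group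
      rw [h]
    have hkey : ∀ n, ((F n).filter (fun g => shift g⁻¹ x = shift b x)).card
        = (((F n).image (· * (a * b⁻¹)⁻¹)).filter (fun g => shift g⁻¹ x = shift a x)).card := by
      intro n
      rw [Finset.filter_image]
      rw [Finset.card_image_of_injective _ (mul_left_injective _)]
      congr 1
      apply Finset.filter_congr
      intro g _
      simpa using (hfib g)
    refine squeeze_zero_norm
      (a := fun n => ((symmDiff ((F n).image (· * (a * b⁻¹)⁻¹)) (F n)).card : ℝ) / ((F n).card : ℝ))
      ?_ (hFol ((a * b⁻¹)⁻¹))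
    · intro n
      rw [Real.norm_eq_abs, hρ]
      simp only
      rw [div_sub_div_same, abs_div, abs_of_pos (hcard n)]
      gcongr
      rw [hkey n]
      exact abs_card_filter_sub (fun g => shift g⁻¹ x = shift a x)
        ((F n).image (· * (a * b⁻¹)⁻¹)) (F n)
  -- each fiber density tends to 1/N
  have hlim : ∀ y ∈ O, Tendsto (fun n => ρ y n) atTop (nhds (1 / (N:ℝ))) := by
    intro y hy
    have hS : Tendsto (fun n => ∑ y' ∈ O, (ρ y' n - ρ y n)) atTop (nhds 0) := by
      have := tendsto_finset_sum O (fun y' hy' => hdiff y hy y' hy')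
      simpa using this
    have heq : ∀ n, ρ y n = (1 - (∑ y' ∈ O, (ρ y' n - ρ y n))) / (N:ℝ) := by
      intro n
      rw [Finset.sum_sub_distrib, hsum n, Finset.sum_const, ← hNdef, nsmul_eq_mul]
      field_simp
      ring
    have h2 : (fun n => ρ y n) = fun n => (1 - ∑ y' ∈ O, (ρ y' n - ρ y n)) / (N:ℝ) :=
      funext heq
    rw [h2]
    have : Tendsto (fun n => (1 - (∑ y' ∈ O, (ρ y' n - ρ y n))) / (N:ℝ)) atTop
        (nhds ((1 - 0) / (N:ℝ))) := (tendsto_const_nhds.sub hS).div_const _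
    simpa using this
  -- the density of x is a sum of fiber densities over the 1-valued orbit points
  set K : ℕ := (O.filter (fun y => y 1 = true)).card with hKdef
  have hdens2 : ∀ n, dens (F n) x = ∑ y ∈ O.filter (fun y => y 1 = true), ρ y n := by
    intro n
    rw [dens, hρ, ← Finset.sum_div]
    congr 1
    norm_cast
    have hfibers := Finset.card_eq_sum_card_fiberwise
      (f := fun g => shift g⁻¹ x) (s := (F n).filter (fun g => x g = true))
      (t := O.filter (fun y => y 1 = true))
      (by
        intro g hg
        rw [Finset.mem_coe, Finset.mem_filter] at hg ⊢
        refine ⟨hmemO g⁻¹, ?_⟩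
        simpa [shift] using hg.2)
    rw [hfibers]
    apply Finset.sum_congr rfl
    intro y hy
    congr 1
    rw [Finset.filter_filter]
    apply Finset.filter_congr
    intro g _
    constructor
    · intro h; exact h.2
    · intro h
      refine ⟨?_, h⟩
      have := congrFun h 1
      simp only [shift, inv_inv, mul_one] at this
      rw [this]
      exact (Finset.mem_filter.mp hy).2
  have hfinal : Tendsto (fun n => dens (F n) x) atTop (nhds ((K : ℝ) / (N : ℝ))) := by
    have := tendsto_finset_sum (O.filter (fun y => y 1 = true))
      (fun y hy => hlim y (Finset.mem_of_mem_filter y hy))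
    rw [funext hdens2]
    simpa [hKdef, Finset.sum_const, nsmul_eq_mul, mul_one_div, div_eq_mul_inv] using this
  have hαeq : α = (K:ℝ) / (N:ℝ) :=
    tendsto_nhds_unique (hdens x hx F ⟨hFne, hFol⟩) hfinal
  exact hirr ⟨(K:ℚ) / (N:ℚ), by rw [hαeq]; push_cast; ring⟩
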